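/- There exists exactly one 16-tuple (K01, P01, P1100, P1010, P0110, L, L0, L00, L01, Q, Q0, Q00, Q01, Q100, Q010, Q110) of formal power series in ℚ[[t]] satisfying the system (with T denoting Q0 − P01 + Q100 − P1100 + Q010 − P1010 + Q110 − P0110): K01 = P01; P01 = t + t·L·Q0; P1100 = t·K01 + t·L·Q100; P1010 = t·K01 + t·L·Q010; P0110 = t·L·Q110; L = 1 + L·Q; L0 = L·Q0; L00 = L·Q00; L01 = L·Q01; Q = 2t·L + t·L·(Q + 2·T); Q0 = t·L + t·L·(Q0 + T); Q00 = t·L0 + t·L·(Q00 + Q100 − P1100); Q01 = t·L0 + t + t·L·(Q01 + Q0 − P01 + Q010 − P1010 + Q110 − P0110); Q100 = t·L01 + t·L·(2·Q100 − P1100); Q010 = t·L01 + t·L·(2·Q010 − P1010); Q110 = t·L00 + t·L·(2·Q110 − P0110). Moreover, the series L of this unique solution satisfies the degree-6 equation 2t⁵·L⁶ − t⁴(t+8)·L⁵ − t³(3t²−16)·L⁴ + t²(2t+3)(2t−5)·L³ − t(2t²−7t−7)·L² − (5t+1)·L + 1 = 0 in ℚ[[t]]. -/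

import Mathlib

open PowerSeries

/-- The system (16) of the paper (prime decomposition, `k = 2`, after the
0/1 symmetry); `T` abbreviates
`Q0 − P01 + Q100 − P1100 + Q010 − P1010 + Q110 − P0110`. -/
def SysLp2 (K01 P01 P1100 P1010 P0110 L L0 L00 L01 Q Q0 Q00 Q01 Q100 Q010 Q110 :
    PowerSeries ℚ) : Prop :=
  K01 = P01 ∧
  P01 = X + X * L * Q0 ∧
  P1100 = X * K01 + X * L * Q100 ∧
  P1010 = X * K01 + X * L * Q010 ∧
  P0110 = X * L * Q110 ∧
  L = 1 + L * Q ∧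
  L0 = L * Q0 ∧
  L00 = L * Q00 ∧
  L01 = L * Q01 ∧
  Q = 2 * X * L + X * L *
      (Q + 2 * (Q0 - P01 + Q100 - P1100 + Q010 - P1010 + Q110 - P0110)) ∧
  Q0 = X * L + X * L *
      (Q0 + (Q0 - P01 + Q100 - P1100 + Q010 - P1010 + Q110 - P0110)) ∧
  Q00 = X * L0 + X * L * (Q00 + Q100 - P1100) ∧
  Q01 = X * L0 + X + X * L * (Q01 + Q0 - P01 + Q010 - P1010 + Q110 - P0110) ∧
  Q100 = X * L01 + X * L * (2 * Q100 - P1100) ∧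
  Q010 = X * L01 + X * L * (2 * Q010 - P1010) ∧
  Q110 = X * L00 + X * L * (2 * Q110 - P0110)

abbrev Vec16 := Fin 16 → PowerSeries ℚ

noncomputable def stp (v : Vec16) : Vec16 :=
  ![
    v 1,
    X + X * v 5 * v 10,
    X * v 0 + X * v 5 * v 13,
    X * v 0 + X * v 5 * v 14,
    X * v 5 * v 15,
    1 + v 5 * v 9,
    v 5 * v 10,
    v 5 * v 11,
    v 5 * v 12,
    2 * X * v 5 + X * v 5 * (v 9 + 2 * (v 10 - v 1 + v 13 - v 2 + v 14 - v 3 + v 15 - v 4)),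
    X * v 5 + X * v 5 * (v 10 + (v 10 - v 1 + v 13 - v 2 + v 14 - v 3 + v 15 - v 4)),
    X * v 6 + X * v 5 * (v 11 + v 13 - v 2),
    X * v 6 + X + X * v 5 * (v 12 + v 10 - v 1 + v 14 - v 3 + v 15 - v 4),
    X * v 8 + X * v 5 * (2 * v 13 - v 2),
    X * v 8 + X * v 5 * (2 * v 14 - v 3),
    X * v 7 + X * v 5 * (2 * v 15 - v 4)]

lemma eqz {f g : ℚ⟦X⟧} (h : ∀ n : ℕ, (X : ℚ⟦X⟧) ^ n ∣ f - g) : f = g := by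
  have hz : f - g = 0 := by
    ext m
    have := (X_pow_dvd_iff.mp (h (m + 1))) m (Nat.lt_succ_self m)
    simpa using this
  exact sub_eq_zero.mp hz

lemma stepX (v : Vec16) :
    (X : ℚ⟦X⟧) ∣ stp v 1 ∧ (X : ℚ⟦X⟧) ∣ stp v 10 ∧
      (X : ℚ⟦X⟧) ∣ stp v 11 ∧ (X : ℚ⟦X⟧) ∣ stp v 12 := by
  refine ⟨⟨1 + v 5 * v 10, ?_⟩, ⟨v 5 + v 5 * (v 10 + (v 10 - v 1 + v 13 - v 2 + v 14 - v 3 + v 15 - v 4)), ?_⟩,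
    ⟨v 6 + v 5 * (v 11 + v 13 - v 2), ?_⟩,
    ⟨v 6 + 1 + v 5 * (v 12 + v 10 - v 1 + v 14 - v 3 + v 15 - v 4), ?_⟩⟩
  · show X + X * v 5 * v 10 = X * _
    ring
  · show X * v 5 + X * v 5 * (v 10 + (v 10 - v 1 + v 13 - v 2 + v 14 - v 3 + v 15 - v 4)) = X * _
    ring
  · show X * v 6 + X * v 5 * (v 11 + v 13 - v 2) = X * _
    ring
  · show X * v 6 + X + X * v 5 * (v 12 + v 10 - v 1 + v 14 - v 3 + v 15 - v 4) = X * _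
    ring

lemma good_step (v : Vec16) (h1 : (X : ℚ⟦X⟧) ∣ v 1) (h10 : (X : ℚ⟦X⟧) ∣ v 10)
    (h11 : (X : ℚ⟦X⟧) ∣ v 11) (h12 : (X : ℚ⟦X⟧) ∣ v 12) :
    ∀ i : Fin 16, i ≠ 5 → (X : ℚ⟦X⟧) ∣ stp v i := by
  obtain ⟨m1, hm1⟩ := h1
  obtain ⟨m10, hm10⟩ := h10
  obtain ⟨m11, hm11⟩ := h11
  obtain ⟨m12, hm12⟩ := h12
  intro i hi
  fin_cases i
  · exact ⟨m1, by show v 1 = X * m1; exact hm1⟩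
  · exact ⟨1 + v 5 * v 10, by show X + X * v 5 * v 10 = X * _; ring⟩
  · exact ⟨v 0 + v 5 * v 13, by show X * v 0 + X * v 5 * v 13 = X * _; ring⟩
  · exact ⟨v 0 + v 5 * v 14, by show X * v 0 + X * v 5 * v 14 = X * _; ring⟩
  · exact ⟨v 5 * v 15, by show X * v 5 * v 15 = X * _; ring⟩
  · exact absurd rfl hi
  · exact ⟨v 5 * m10, by show v 5 * v 10 = X * _; rw [hm10]; ring⟩
  · exact ⟨v 5 * m11, by show v 5 * v 11 = X * _; rw [hm11]; ring⟩
  · exact ⟨v 5 * m12, by show v 5 * v 12 = X * _; rw [hm12]; ring⟩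
  · exact ⟨2 * v 5 + v 5 * (v 9 + 2 * (v 10 - v 1 + v 13 - v 2 + v 14 - v 3 + v 15 - v 4)), by
      show 2 * X * v 5 + X * v 5 * _ = X * _; ring⟩
  · exact ⟨v 5 + v 5 * (v 10 + (v 10 - v 1 + v 13 - v 2 + v 14 - v 3 + v 15 - v 4)), by
      show X * v 5 + X * v 5 * _ = X * _; ring⟩
  · exact ⟨v 6 + v 5 * (v 11 + v 13 - v 2), by show X * v 6 + X * v 5 * _ = X * _; ring⟩
  · exact ⟨v 6 + 1 + v 5 * (v 12 + v 10 - v 1 + v 14 - v 3 + v 15 - v 4), by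
      show X * v 6 + X + X * v 5 * _ = X * _; ring⟩
  · exact ⟨v 8 + v 5 * (2 * v 13 - v 2), by show X * v 8 + X * v 5 * _ = X * _; ring⟩
  · exact ⟨v 8 + v 5 * (2 * v 14 - v 3), by show X * v 8 + X * v 5 * _ = X * _; ring⟩
  · exact ⟨v 7 + v 5 * (2 * v 15 - v 4), by show X * v 7 + X * v 5 * _ = X * _; ring⟩


lemma close_step {n : ℕ} {a b : Vec16} (h : ∀ i, (X : ℚ⟦X⟧) ^ n ∣ a i - b i) :
    ∀ i, (X : ℚ⟦X⟧) ^ n ∣ stp a i - stp b i := by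
  choose k hk using h
  intro i
  fin_cases i
  · exact ⟨k 1, by show a 1 - b 1 = X ^ n * k 1; exact hk 1⟩
  · exact ⟨(X * a 10) * k 5 + (X * b 5) * k 10, by
      show (X + X * a 5 * a 10) - (X + X * b 5 * b 10) = X ^ n * ((X * a 10) * k 5 + (X * b 5) * k 10)
      linear_combination (norm := ring1) (X * a 10) * hk 5 + (X * b 5) * hk 10⟩
  · exact ⟨(X) * k 0 + (X * a 13) * k 5 + (X * b 5) * k 13, by
      show (X * a 0 + X * a 5 * a 13) - (X * b 0 + X * b 5 * b 13) = X ^ n * ((X) * k 0 + (X * a 13) * k 5 + (X * b 5) * k 13)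
      linear_combination (norm := ring1) (X) * hk 0 + (X * a 13) * hk 5 + (X * b 5) * hk 13⟩
  · exact ⟨(X) * k 0 + (X * a 14) * k 5 + (X * b 5) * k 14, by
      show (X * a 0 + X * a 5 * a 14) - (X * b 0 + X * b 5 * b 14) = X ^ n * ((X) * k 0 + (X * a 14) * k 5 + (X * b 5) * k 14)
      linear_combination (norm := ring1) (X) * hk 0 + (X * a 14) * hk 5 + (X * b 5) * hk 14⟩
  · exact ⟨(X * a 15) * k 5 + (X * b 5) * k 15, by
      show (X * a 5 * a 15) - (X * b 5 * b 15) = X ^ n * ((X * a 15) * k 5 + (X * b 5) * k 15)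
      linear_combination (norm := ring1) (X * a 15) * hk 5 + (X * b 5) * hk 15⟩
  · exact ⟨(a 9) * k 5 + (b 5) * k 9, by
      show (1 + a 5 * a 9) - (1 + b 5 * b 9) = X ^ n * ((a 9) * k 5 + (b 5) * k 9)
      linear_combination (norm := ring1) (a 9) * hk 5 + (b 5) * hk 9⟩
  · exact ⟨(a 10) * k 5 + (b 5) * k 10, by
      show (a 5 * a 10) - (b 5 * b 10) = X ^ n * ((a 10) * k 5 + (b 5) * k 10)
      linear_combination (norm := ring1) (a 10) * hk 5 + (b 5) * hk 10⟩
  · exact ⟨(a 11) * k 5 + (b 5) * k 11, by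
      show (a 5 * a 11) - (b 5 * b 11) = X ^ n * ((a 11) * k 5 + (b 5) * k 11)
      linear_combination (norm := ring1) (a 11) * hk 5 + (b 5) * hk 11⟩
  · exact ⟨(a 12) * k 5 + (b 5) * k 12, by
      show (a 5 * a 12) - (b 5 * b 12) = X ^ n * ((a 12) * k 5 + (b 5) * k 12)
      linear_combination (norm := ring1) (a 12) * hk 5 + (b 5) * hk 12⟩
  · exact ⟨((-2) * X * b 5) * k 1 + ((-2) * X * b 5) * k 2 + ((-2) * X * b 5) * k 3 + ((-2) * X * b 5) * k 4 + (2 * X + X * a 9 + 2 * X * a 10 + (-2) * X * a 1 + 2 * X * a 13 + (-2) * X * a 2 + 2 * X * a 14 + (-2) * X * a 3 + 2 * X * a 15 + (-2) * X * a 4) * k 5 + (X * b 5) * k 9 + (2 * X * b 5) * k 10 + (2 * X * b 5) * k 13 + (2 * X * b 5) * k 14 + (2 * X * b 5) * k 15, by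
      show (2 * X * a 5 + X * a 5 * (a 9 + 2 * (a 10 - a 1 + a 13 - a 2 + a 14 - a 3 + a 15 - a 4))) - (2 * X * b 5 + X * b 5 * (b 9 + 2 * (b 10 - b 1 + b 13 - b 2 + b 14 - b 3 + b 15 - b 4))) = X ^ n * (((-2) * X * b 5) * k 1 + ((-2) * X * b 5) * k 2 + ((-2) * X * b 5) * k 3 + ((-2) * X * b 5) * k 4 + (2 * X + X * a 9 + 2 * X * a 10 + (-2) * X * a 1 + 2 * X * a 13 + (-2) * X * a 2 + 2 * X * a 14 + (-2) * X * a 3 + 2 * X * a 15 + (-2) * X * a 4) * k 5 + (X * b 5) * k 9 + (2 * X * b 5) * k 10 + (2 * X * b 5) * k 13 + (2 * X * b 5) * k 14 + (2 * X * b 5) * k 15)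
      linear_combination (norm := ring1) ((-2) * X * b 5) * hk 1 + ((-2) * X * b 5) * hk 2 + ((-2) * X * b 5) * hk 3 + ((-2) * X * b 5) * hk 4 + (2 * X + X * a 9 + 2 * X * a 10 + (-2) * X * a 1 + 2 * X * a 13 + (-2) * X * a 2 + 2 * X * a 14 + (-2) * X * a 3 + 2 * X * a 15 + (-2) * X * a 4) * hk 5 + (X * b 5) * hk 9 + (2 * X * b 5) * hk 10 + (2 * X * b 5) * hk 13 + (2 * X * b 5) * hk 14 + (2 * X * b 5) * hk 15⟩
  · exact ⟨((-1) * X * b 5) * k 1 + ((-1) * X * b 5) * k 2 + ((-1) * X * b 5) * k 3 + ((-1) * X * b 5) * k 4 + (X + 2 * X * a 10 + (-1) * X * a 1 + X * a 13 + (-1) * X * a 2 + X * a 14 + (-1) * X * a 3 + X * a 15 + (-1) * X * a 4) * k 5 + (2 * X * b 5) * k 10 + (X * b 5) * k 13 + (X * b 5) * k 14 + (X * b 5) * k 15, by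
      show (X * a 5 + X * a 5 * (a 10 + (a 10 - a 1 + a 13 - a 2 + a 14 - a 3 + a 15 - a 4))) - (X * b 5 + X * b 5 * (b 10 + (b 10 - b 1 + b 13 - b 2 + b 14 - b 3 + b 15 - b 4))) = X ^ n * (((-1) * X * b 5) * k 1 + ((-1) * X * b 5) * k 2 + ((-1) * X * b 5) * k 3 + ((-1) * X * b 5) * k 4 + (X + 2 * X * a 10 + (-1) * X * a 1 + X * a 13 + (-1) * X * a 2 + X * a 14 + (-1) * X * a 3 + X * a 15 + (-1) * X * a 4) * k 5 + (2 * X * b 5) * k 10 + (X * b 5) * k 13 + (X * b 5) * k 14 + (X * b 5) * k 15)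
      linear_combination (norm := ring1) ((-1) * X * b 5) * hk 1 + ((-1) * X * b 5) * hk 2 + ((-1) * X * b 5) * hk 3 + ((-1) * X * b 5) * hk 4 + (X + 2 * X * a 10 + (-1) * X * a 1 + X * a 13 + (-1) * X * a 2 + X * a 14 + (-1) * X * a 3 + X * a 15 + (-1) * X * a 4) * hk 5 + (2 * X * b 5) * hk 10 + (X * b 5) * hk 13 + (X * b 5) * hk 14 + (X * b 5) * hk 15⟩
  · exact ⟨((-1) * X * b 5) * k 2 + (X * a 11 + X * a 13 + (-1) * X * a 2) * k 5 + (X) * k 6 + (X * b 5) * k 11 + (X * b 5) * k 13, by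
      show (X * a 6 + X * a 5 * (a 11 + a 13 - a 2)) - (X * b 6 + X * b 5 * (b 11 + b 13 - b 2)) = X ^ n * (((-1) * X * b 5) * k 2 + (X * a 11 + X * a 13 + (-1) * X * a 2) * k 5 + (X) * k 6 + (X * b 5) * k 11 + (X * b 5) * k 13)
      linear_combination (norm := ring1) ((-1) * X * b 5) * hk 2 + (X * a 11 + X * a 13 + (-1) * X * a 2) * hk 5 + (X) * hk 6 + (X * b 5) * hk 11 + (X * b 5) * hk 13⟩
  · exact ⟨((-1) * X * b 5) * k 1 + ((-1) * X * b 5) * k 3 + ((-1) * X * b 5) * k 4 + (X * a 12 + X * a 10 + (-1) * X * a 1 + X * a 14 + (-1) * X * a 3 + X * a 15 + (-1) * X * a 4) * k 5 + (X) * k 6 + (X * b 5) * k 10 + (X * b 5) * k 12 + (X * b 5) * k 14 + (X * b 5) * k 15, by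
      show (X * a 6 + X + X * a 5 * (a 12 + a 10 - a 1 + a 14 - a 3 + a 15 - a 4)) - (X * b 6 + X + X * b 5 * (b 12 + b 10 - b 1 + b 14 - b 3 + b 15 - b 4)) = X ^ n * (((-1) * X * b 5) * k 1 + ((-1) * X * b 5) * k 3 + ((-1) * X * b 5) * k 4 + (X * a 12 + X * a 10 + (-1) * X * a 1 + X * a 14 + (-1) * X * a 3 + X * a 15 + (-1) * X * a 4) * k 5 + (X) * k 6 + (X * b 5) * k 10 + (X * b 5) * k 12 + (X * b 5) * k 14 + (X * b 5) * k 15)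
      linear_combination (norm := ring1) ((-1) * X * b 5) * hk 1 + ((-1) * X * b 5) * hk 3 + ((-1) * X * b 5) * hk 4 + (X * a 12 + X * a 10 + (-1) * X * a 1 + X * a 14 + (-1) * X * a 3 + X * a 15 + (-1) * X * a 4) * hk 5 + (X) * hk 6 + (X * b 5) * hk 10 + (X * b 5) * hk 12 + (X * b 5) * hk 14 + (X * b 5) * hk 15⟩
  · exact ⟨((-1) * X * b 5) * k 2 + (2 * X * a 13 + (-1) * X * a 2) * k 5 + (X) * k 8 + (2 * X * b 5) * k 13, by
      show (X * a 8 + X * a 5 * (2 * a 13 - a 2)) - (X * b 8 + X * b 5 * (2 * b 13 - b 2)) = X ^ n * (((-1) * X * b 5) * k 2 + (2 * X * a 13 + (-1) * X * a 2) * k 5 + (X) * k 8 + (2 * X * b 5) * k 13)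
      linear_combination (norm := ring1) ((-1) * X * b 5) * hk 2 + (2 * X * a 13 + (-1) * X * a 2) * hk 5 + (X) * hk 8 + (2 * X * b 5) * hk 13⟩
  · exact ⟨((-1) * X * b 5) * k 3 + (2 * X * a 14 + (-1) * X * a 3) * k 5 + (X) * k 8 + (2 * X * b 5) * k 14, by
      show (X * a 8 + X * a 5 * (2 * a 14 - a 3)) - (X * b 8 + X * b 5 * (2 * b 14 - b 3)) = X ^ n * (((-1) * X * b 5) * k 3 + (2 * X * a 14 + (-1) * X * a 3) * k 5 + (X) * k 8 + (2 * X * b 5) * k 14)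
      linear_combination (norm := ring1) ((-1) * X * b 5) * hk 3 + (2 * X * a 14 + (-1) * X * a 3) * hk 5 + (X) * hk 8 + (2 * X * b 5) * hk 14⟩
  · exact ⟨((-1) * X * b 5) * k 4 + (2 * X * a 15 + (-1) * X * a 4) * k 5 + (X) * k 7 + (2 * X * b 5) * k 15, by
      show (X * a 7 + X * a 5 * (2 * a 15 - a 4)) - (X * b 7 + X * b 5 * (2 * b 15 - b 4)) = X ^ n * (((-1) * X * b 5) * k 4 + (2 * X * a 15 + (-1) * X * a 4) * k 5 + (X) * k 7 + (2 * X * b 5) * k 15)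
      linear_combination (norm := ring1) ((-1) * X * b 5) * hk 4 + (2 * X * a 15 + (-1) * X * a 4) * hk 5 + (X) * hk 7 + (2 * X * b 5) * hk 15⟩

lemma close_half {n : ℕ} {a b : Vec16} (h : ∀ i, (X : ℚ⟦X⟧) ^ n ∣ a i - b i) :
    ((X : ℚ⟦X⟧) ^ (n + 1) ∣ stp a 1 - stp b 1) ∧
    ((X : ℚ⟦X⟧) ^ (n + 1) ∣ stp a 9 - stp b 9) ∧
    ((X : ℚ⟦X⟧) ^ (n + 1) ∣ stp a 10 - stp b 10) ∧
    ((X : ℚ⟦X⟧) ^ (n + 1) ∣ stp a 11 - stp b 11) ∧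
    ((X : ℚ⟦X⟧) ^ (n + 1) ∣ stp a 12 - stp b 12) := by
  choose k hk using h
  refine ⟨?_, ?_, ?_, ?_, ?_⟩
  · exact ⟨(a 10) * k 5 + (b 5) * k 10, by
      show (X + X * a 5 * a 10) - (X + X * b 5 * b 10) = X ^ (n + 1) * ((a 10) * k 5 + (b 5) * k 10)
      linear_combination (norm := ring1) (X * a 10) * hk 5 + (X * b 5) * hk 10⟩
  · exact ⟨((-2) * b 5) * k 1 + ((-2) * b 5) * k 2 + ((-2) * b 5) * k 3 + ((-2) * b 5) * k 4 + (2 + a 9 + 2 * a 10 + (-2) * a 1 + 2 * a 13 + (-2) * a 2 + 2 * a 14 + (-2) * a 3 + 2 * a 15 + (-2) * a 4) * k 5 + (b 5) * k 9 + (2 * b 5) * k 10 + (2 * b 5) * k 13 + (2 * b 5) * k 14 + (2 * b 5) * k 15, by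
      show (2 * X * a 5 + X * a 5 * (a 9 + 2 * (a 10 - a 1 + a 13 - a 2 + a 14 - a 3 + a 15 - a 4))) - (2 * X * b 5 + X * b 5 * (b 9 + 2 * (b 10 - b 1 + b 13 - b 2 + b 14 - b 3 + b 15 - b 4))) = X ^ (n + 1) * (((-2) * b 5) * k 1 + ((-2) * b 5) * k 2 + ((-2) * b 5) * k 3 + ((-2) * b 5) * k 4 + (2 + a 9 + 2 * a 10 + (-2) * a 1 + 2 * a 13 + (-2) * a 2 + 2 * a 14 + (-2) * a 3 + 2 * a 15 + (-2) * a 4) * k 5 + (b 5) * k 9 + (2 * b 5) * k 10 + (2 * b 5) * k 13 + (2 * b 5) * k 14 + (2 * b 5) * k 15)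
      linear_combination (norm := ring1) (X * (-2) * b 5) * hk 1 + (X * (-2) * b 5) * hk 2 + (X * (-2) * b 5) * hk 3 + (X * (-2) * b 5) * hk 4 + (X * 2 + X * a 9 + X * 2 * a 10 + X * (-2) * a 1 + X * 2 * a 13 + X * (-2) * a 2 + X * 2 * a 14 + X * (-2) * a 3 + X * 2 * a 15 + X * (-2) * a 4) * hk 5 + (X * b 5) * hk 9 + (X * 2 * b 5) * hk 10 + (X * 2 * b 5) * hk 13 + (X * 2 * b 5) * hk 14 + (X * 2 * b 5) * hk 15⟩
  · exact ⟨((-1) * b 5) * k 1 + ((-1) * b 5) * k 2 + ((-1) * b 5) * k 3 + ((-1) * b 5) * k 4 + (1 + 2 * a 10 + (-1) * a 1 + a 13 + (-1) * a 2 + a 14 + (-1) * a 3 + a 15 + (-1) * a 4) * k 5 + (2 * b 5) * k 10 + (b 5) * k 13 + (b 5) * k 14 + (b 5) * k 15, by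
      show (X * a 5 + X * a 5 * (a 10 + (a 10 - a 1 + a 13 - a 2 + a 14 - a 3 + a 15 - a 4))) - (X * b 5 + X * b 5 * (b 10 + (b 10 - b 1 + b 13 - b 2 + b 14 - b 3 + b 15 - b 4))) = X ^ (n + 1) * (((-1) * b 5) * k 1 + ((-1) * b 5) * k 2 + ((-1) * b 5) * k 3 + ((-1) * b 5) * k 4 + (1 + 2 * a 10 + (-1) * a 1 + a 13 + (-1) * a 2 + a 14 + (-1) * a 3 + a 15 + (-1) * a 4) * k 5 + (2 * b 5) * k 10 + (b 5) * k 13 + (b 5) * k 14 + (b 5) * k 15)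
      linear_combination (norm := ring1) (X * (-1) * b 5) * hk 1 + (X * (-1) * b 5) * hk 2 + (X * (-1) * b 5) * hk 3 + (X * (-1) * b 5) * hk 4 + (X * 1 + X * 2 * a 10 + X * (-1) * a 1 + X * a 13 + X * (-1) * a 2 + X * a 14 + X * (-1) * a 3 + X * a 15 + X * (-1) * a 4) * hk 5 + (X * 2 * b 5) * hk 10 + (X * b 5) * hk 13 + (X * b 5) * hk 14 + (X * b 5) * hk 15⟩
  · exact ⟨((-1) * b 5) * k 2 + (a 11 + a 13 + (-1) * a 2) * k 5 + (1) * k 6 + (b 5) * k 11 + (b 5) * k 13, by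
      show (X * a 6 + X * a 5 * (a 11 + a 13 - a 2)) - (X * b 6 + X * b 5 * (b 11 + b 13 - b 2)) = X ^ (n + 1) * (((-1) * b 5) * k 2 + (a 11 + a 13 + (-1) * a 2) * k 5 + (1) * k 6 + (b 5) * k 11 + (b 5) * k 13)
      linear_combination (norm := ring1) (X * (-1) * b 5) * hk 2 + (X * a 11 + X * a 13 + X * (-1) * a 2) * hk 5 + (X * 1) * hk 6 + (X * b 5) * hk 11 + (X * b 5) * hk 13⟩
  · exact ⟨((-1) * b 5) * k 1 + ((-1) * b 5) * k 3 + ((-1) * b 5) * k 4 + (a 12 + a 10 + (-1) * a 1 + a 14 + (-1) * a 3 + a 15 + (-1) * a 4) * k 5 + (1) * k 6 + (b 5) * k 10 + (b 5) * k 12 + (b 5) * k 14 + (b 5) * k 15, by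
      show (X * a 6 + X + X * a 5 * (a 12 + a 10 - a 1 + a 14 - a 3 + a 15 - a 4)) - (X * b 6 + X + X * b 5 * (b 12 + b 10 - b 1 + b 14 - b 3 + b 15 - b 4)) = X ^ (n + 1) * (((-1) * b 5) * k 1 + ((-1) * b 5) * k 3 + ((-1) * b 5) * k 4 + (a 12 + a 10 + (-1) * a 1 + a 14 + (-1) * a 3 + a 15 + (-1) * a 4) * k 5 + (1) * k 6 + (b 5) * k 10 + (b 5) * k 12 + (b 5) * k 14 + (b 5) * k 15)
      linear_combination (norm := ring1) (X * (-1) * b 5) * hk 1 + (X * (-1) * b 5) * hk 3 + (X * (-1) * b 5) * hk 4 + (X * a 12 + X * a 10 + X * (-1) * a 1 + X * a 14 + X * (-1) * a 3 + X * a 15 + X * (-1) * a 4) * hk 5 + (X * 1) * hk 6 + (X * b 5) * hk 10 + (X * b 5) * hk 12 + (X * b 5) * hk 14 + (X * b 5) * hk 15⟩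

lemma close_full {n : ℕ} {a b : Vec16} (h : ∀ i, (X : ℚ⟦X⟧) ^ n ∣ a i - b i)
    (hB1 : (X : ℚ⟦X⟧) ^ (n + 1) ∣ a 1 - b 1)
    (hB9 : (X : ℚ⟦X⟧) ^ (n + 1) ∣ a 9 - b 9)
    (hB10 : (X : ℚ⟦X⟧) ^ (n + 1) ∣ a 10 - b 10)
    (hB11 : (X : ℚ⟦X⟧) ^ (n + 1) ∣ a 11 - b 11)
    (hB12 : (X : ℚ⟦X⟧) ^ (n + 1) ∣ a 12 - b 12)
    (hg : ∀ i : Fin 16, i ≠ 5 → (X : ℚ⟦X⟧) ∣ a i) :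
    ∀ i, (X : ℚ⟦X⟧) ^ (n + 1) ∣ stp a i - stp b i := by
  choose k hk using h
  obtain ⟨c1, hc1⟩ := hB1
  obtain ⟨c9, hc9⟩ := hB9
  obtain ⟨c10, hc10⟩ := hB10
  obtain ⟨c11, hc11⟩ := hB11
  obtain ⟨c12, hc12⟩ := hB12
  obtain ⟨m9, hm9⟩ := hg 9 (by decide)
  obtain ⟨m10, hm10⟩ := hg 10 (by decide)
  obtain ⟨m11, hm11⟩ := hg 11 (by decide)
  obtain ⟨m12, hm12⟩ := hg 12 (by decide)
  intro i
  fin_cases i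
  · exact ⟨c1, by show a 1 - b 1 = X ^ (n + 1) * c1; exact hc1⟩
  · exact ⟨(a 10) * k 5 + (b 5) * k 10, by
      show (X + X * a 5 * a 10) - (X + X * b 5 * b 10) = X ^ (n + 1) * ((a 10) * k 5 + (b 5) * k 10)
      linear_combination (norm := ring1) (X * a 10) * hk 5 + (X * b 5) * hk 10⟩
  · exact ⟨(1) * k 0 + (a 13) * k 5 + (b 5) * k 13, by
      show (X * a 0 + X * a 5 * a 13) - (X * b 0 + X * b 5 * b 13) = X ^ (n + 1) * ((1) * k 0 + (a 13) * k 5 + (b 5) * k 13)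
      linear_combination (norm := ring1) (X * 1) * hk 0 + (X * a 13) * hk 5 + (X * b 5) * hk 13⟩
  · exact ⟨(1) * k 0 + (a 14) * k 5 + (b 5) * k 14, by
      show (X * a 0 + X * a 5 * a 14) - (X * b 0 + X * b 5 * b 14) = X ^ (n + 1) * ((1) * k 0 + (a 14) * k 5 + (b 5) * k 14)
      linear_combination (norm := ring1) (X * 1) * hk 0 + (X * a 14) * hk 5 + (X * b 5) * hk 14⟩
  · exact ⟨(a 15) * k 5 + (b 5) * k 15, by
      show (X * a 5 * a 15) - (X * b 5 * b 15) = X ^ (n + 1) * ((a 15) * k 5 + (b 5) * k 15)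
      linear_combination (norm := ring1) (X * a 15) * hk 5 + (X * b 5) * hk 15⟩
  · exact ⟨k 5 * m9 + b 5 * c9, by
      show (1 + a 5 * a 9) - (1 + b 5 * b 9) = X ^ (n + 1) * (k 5 * m9 + b 5 * c9)
      linear_combination (norm := ring1) (a 9) * hk 5 + (b 5) * hc9 + (X ^ n * k 5) * hm9⟩
  · exact ⟨k 5 * m10 + b 5 * c10, by
      show (a 5 * a 10) - (b 5 * b 10) = X ^ (n + 1) * (k 5 * m10 + b 5 * c10)
      linear_combination (norm := ring1) (a 10) * hk 5 + (b 5) * hc10 + (X ^ n * k 5) * hm10⟩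
  · exact ⟨k 5 * m11 + b 5 * c11, by
      show (a 5 * a 11) - (b 5 * b 11) = X ^ (n + 1) * (k 5 * m11 + b 5 * c11)
      linear_combination (norm := ring1) (a 11) * hk 5 + (b 5) * hc11 + (X ^ n * k 5) * hm11⟩
  · exact ⟨k 5 * m12 + b 5 * c12, by
      show (a 5 * a 12) - (b 5 * b 12) = X ^ (n + 1) * (k 5 * m12 + b 5 * c12)
      linear_combination (norm := ring1) (a 12) * hk 5 + (b 5) * hc12 + (X ^ n * k 5) * hm12⟩
  · exact ⟨((-2) * b 5) * k 1 + ((-2) * b 5) * k 2 + ((-2) * b 5) * k 3 + ((-2) * b 5) * k 4 + (2 + a 9 + 2 * a 10 + (-2) * a 1 + 2 * a 13 + (-2) * a 2 + 2 * a 14 + (-2) * a 3 + 2 * a 15 + (-2) * a 4) * k 5 + (b 5) * k 9 + (2 * b 5) * k 10 + (2 * b 5) * k 13 + (2 * b 5) * k 14 + (2 * b 5) * k 15, by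
      show (2 * X * a 5 + X * a 5 * (a 9 + 2 * (a 10 - a 1 + a 13 - a 2 + a 14 - a 3 + a 15 - a 4))) - (2 * X * b 5 + X * b 5 * (b 9 + 2 * (b 10 - b 1 + b 13 - b 2 + b 14 - b 3 + b 15 - b 4))) = X ^ (n + 1) * (((-2) * b 5) * k 1 + ((-2) * b 5) * k 2 + ((-2) * b 5) * k 3 + ((-2) * b 5) * k 4 + (2 + a 9 + 2 * a 10 + (-2) * a 1 + 2 * a 13 + (-2) * a 2 + 2 * a 14 + (-2) * a 3 + 2 * a 15 + (-2) * a 4) * k 5 + (b 5) * k 9 + (2 * b 5) * k 10 + (2 * b 5) * k 13 + (2 * b 5) * k 14 + (2 * b 5) * k 15)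
      linear_combination (norm := ring1) (X * (-2) * b 5) * hk 1 + (X * (-2) * b 5) * hk 2 + (X * (-2) * b 5) * hk 3 + (X * (-2) * b 5) * hk 4 + (X * 2 + X * a 9 + X * 2 * a 10 + X * (-2) * a 1 + X * 2 * a 13 + X * (-2) * a 2 + X * 2 * a 14 + X * (-2) * a 3 + X * 2 * a 15 + X * (-2) * a 4) * hk 5 + (X * b 5) * hk 9 + (X * 2 * b 5) * hk 10 + (X * 2 * b 5) * hk 13 + (X * 2 * b 5) * hk 14 + (X * 2 * b 5) * hk 15⟩
  · exact ⟨((-1) * b 5) * k 1 + ((-1) * b 5) * k 2 + ((-1) * b 5) * k 3 + ((-1) * b 5) * k 4 + (1 + 2 * a 10 + (-1) * a 1 + a 13 + (-1) * a 2 + a 14 + (-1) * a 3 + a 15 + (-1) * a 4) * k 5 + (2 * b 5) * k 10 + (b 5) * k 13 + (b 5) * k 14 + (b 5) * k 15, by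
      show (X * a 5 + X * a 5 * (a 10 + (a 10 - a 1 + a 13 - a 2 + a 14 - a 3 + a 15 - a 4))) - (X * b 5 + X * b 5 * (b 10 + (b 10 - b 1 + b 13 - b 2 + b 14 - b 3 + b 15 - b 4))) = X ^ (n + 1) * (((-1) * b 5) * k 1 + ((-1) * b 5) * k 2 + ((-1) * b 5) * k 3 + ((-1) * b 5) * k 4 + (1 + 2 * a 10 + (-1) * a 1 + a 13 + (-1) * a 2 + a 14 + (-1) * a 3 + a 15 + (-1) * a 4) * k 5 + (2 * b 5) * k 10 + (b 5) * k 13 + (b 5) * k 14 + (b 5) * k 15)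
      linear_combination (norm := ring1) (X * (-1) * b 5) * hk 1 + (X * (-1) * b 5) * hk 2 + (X * (-1) * b 5) * hk 3 + (X * (-1) * b 5) * hk 4 + (X * 1 + X * 2 * a 10 + X * (-1) * a 1 + X * a 13 + X * (-1) * a 2 + X * a 14 + X * (-1) * a 3 + X * a 15 + X * (-1) * a 4) * hk 5 + (X * 2 * b 5) * hk 10 + (X * b 5) * hk 13 + (X * b 5) * hk 14 + (X * b 5) * hk 15⟩
  · exact ⟨((-1) * b 5) * k 2 + (a 11 + a 13 + (-1) * a 2) * k 5 + (1) * k 6 + (b 5) * k 11 + (b 5) * k 13, by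
      show (X * a 6 + X * a 5 * (a 11 + a 13 - a 2)) - (X * b 6 + X * b 5 * (b 11 + b 13 - b 2)) = X ^ (n + 1) * (((-1) * b 5) * k 2 + (a 11 + a 13 + (-1) * a 2) * k 5 + (1) * k 6 + (b 5) * k 11 + (b 5) * k 13)
      linear_combination (norm := ring1) (X * (-1) * b 5) * hk 2 + (X * a 11 + X * a 13 + X * (-1) * a 2) * hk 5 + (X * 1) * hk 6 + (X * b 5) * hk 11 + (X * b 5) * hk 13⟩
  · exact ⟨((-1) * b 5) * k 1 + ((-1) * b 5) * k 3 + ((-1) * b 5) * k 4 + (a 12 + a 10 + (-1) * a 1 + a 14 + (-1) * a 3 + a 15 + (-1) * a 4) * k 5 + (1) * k 6 + (b 5) * k 10 + (b 5) * k 12 + (b 5) * k 14 + (b 5) * k 15, by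
      show (X * a 6 + X + X * a 5 * (a 12 + a 10 - a 1 + a 14 - a 3 + a 15 - a 4)) - (X * b 6 + X + X * b 5 * (b 12 + b 10 - b 1 + b 14 - b 3 + b 15 - b 4)) = X ^ (n + 1) * (((-1) * b 5) * k 1 + ((-1) * b 5) * k 3 + ((-1) * b 5) * k 4 + (a 12 + a 10 + (-1) * a 1 + a 14 + (-1) * a 3 + a 15 + (-1) * a 4) * k 5 + (1) * k 6 + (b 5) * k 10 + (b 5) * k 12 + (b 5) * k 14 + (b 5) * k 15)
      linear_combination (norm := ring1) (X * (-1) * b 5) * hk 1 + (X * (-1) * b 5) * hk 3 + (X * (-1) * b 5) * hk 4 + (X * a 12 + X * a 10 + X * (-1) * a 1 + X * a 14 + X * (-1) * a 3 + X * a 15 + X * (-1) * a 4) * hk 5 + (X * 1) * hk 6 + (X * b 5) * hk 10 + (X * b 5) * hk 12 + (X * b 5) * hk 14 + (X * b 5) * hk 15⟩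
  · exact ⟨((-1) * b 5) * k 2 + (2 * a 13 + (-1) * a 2) * k 5 + (1) * k 8 + (2 * b 5) * k 13, by
      show (X * a 8 + X * a 5 * (2 * a 13 - a 2)) - (X * b 8 + X * b 5 * (2 * b 13 - b 2)) = X ^ (n + 1) * (((-1) * b 5) * k 2 + (2 * a 13 + (-1) * a 2) * k 5 + (1) * k 8 + (2 * b 5) * k 13)
      linear_combination (norm := ring1) (X * (-1) * b 5) * hk 2 + (X * 2 * a 13 + X * (-1) * a 2) * hk 5 + (X * 1) * hk 8 + (X * 2 * b 5) * hk 13⟩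
  · exact ⟨((-1) * b 5) * k 3 + (2 * a 14 + (-1) * a 3) * k 5 + (1) * k 8 + (2 * b 5) * k 14, by
      show (X * a 8 + X * a 5 * (2 * a 14 - a 3)) - (X * b 8 + X * b 5 * (2 * b 14 - b 3)) = X ^ (n + 1) * (((-1) * b 5) * k 3 + (2 * a 14 + (-1) * a 3) * k 5 + (1) * k 8 + (2 * b 5) * k 14)
      linear_combination (norm := ring1) (X * (-1) * b 5) * hk 3 + (X * 2 * a 14 + X * (-1) * a 3) * hk 5 + (X * 1) * hk 8 + (X * 2 * b 5) * hk 14⟩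
  · exact ⟨((-1) * b 5) * k 4 + (2 * a 15 + (-1) * a 4) * k 5 + (1) * k 7 + (2 * b 5) * k 15, by
      show (X * a 7 + X * a 5 * (2 * a 15 - a 4)) - (X * b 7 + X * b 5 * (2 * b 15 - b 4)) = X ^ (n + 1) * (((-1) * b 5) * k 4 + (2 * a 15 + (-1) * a 4) * k 5 + (1) * k 7 + (2 * b 5) * k 15)
      linear_combination (norm := ring1) (X * (-1) * b 5) * hk 4 + (X * 2 * a 15 + X * (-1) * a 4) * hk 5 + (X * 1) * hk 7 + (X * 2 * b 5) * hk 15⟩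

noncomputable def seqW : ℕ → Vec16
  | 0 => stp (stp fun _ => 0)
  | (k + 1) => stp (seqW k)

lemma seqW_succ (k : ℕ) : seqW (k + 1) = stp (seqW k) := rfl

lemma good_w : ∀ k, ∀ i : Fin 16, i ≠ 5 → (X : ℚ⟦X⟧) ∣ seqW k i := by
  intro k
  induction k with
  | zero =>
      obtain ⟨g1, g10, g11, g12⟩ := stepX (fun _ => 0)
      exact good_step _ g1 g10 g11 g12
  | succ k ih =>
      exact good_step _ (ih 1 (by decide)) (ih 10 (by decide)) (ih 11 (by decide))
        (ih 12 (by decide))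

lemma close_double {n : ℕ} {a b : Vec16} (h : ∀ i, (X : ℚ⟦X⟧) ^ n ∣ a i - b i)
    (hg : ∀ i : Fin 16, i ≠ 5 → (X : ℚ⟦X⟧) ∣ stp a i) :
    ∀ i, (X : ℚ⟦X⟧) ^ (n + 1) ∣ stp (stp a) i - stp (stp b) i := by
  obtain ⟨hB1, hB9, hB10, hB11, hB12⟩ := close_half h
  exact close_full (close_step h) hB1 hB9 hB10 hB11 hB12 hg

lemma cl : ∀ n k, ∀ i, (X : ℚ⟦X⟧) ^ n ∣ seqW (2 * n + k) i - seqW (2 * n + k + 1) i := by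
  intro n
  induction n with
  | zero => intro k i; simpa using one_dvd _
  | succ n ih =>
      intro k i
      have h2 := close_double (ih k) (by
        have := good_w (2 * n + k + 1)
        simpa [seqW_succ] using this)
      have e1 : 2 * (n + 1) + k = 2 * n + k + 1 + 1 := by ring
      rw [e1]
      simp only [seqW_succ]
      exact h2 i

lemma hstep : ∀ n j, 2 * n ≤ j → ∀ i, (X : ℚ⟦X⟧) ^ n ∣ seqW j i - seqW (j + 1) i := by
  intro n j hj i
  obtain ⟨k, rfl⟩ : ∃ k, j = 2 * n + k := ⟨j - 2 * n, by omega⟩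
  exact cl n k i

lemma chain : ∀ n j l, 2 * n ≤ j → j ≤ l → ∀ i,
    (X : ℚ⟦X⟧) ^ n ∣ seqW l i - seqW j i := by
  intro n j l hj hl
  induction l, hl using Nat.le_induction with
  | base => intro i; simp
  | succ l hl ih =>
      intro i
      have h1 := hstep n l (le_trans hj hl) i
      have h2 := ih i
      have e : seqW (l + 1) i - seqW j i =
          (seqW l i - seqW j i) - (seqW l i - seqW (l + 1) i) := by ring
      rw [e]
      exact dvd_sub h2 h1

noncomputable def limW : Vec16 := fun i => PowerSeries.mk fun m => coeff m (seqW (2 * m + 2) i)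

lemma hu : ∀ n, ∀ i, (X : ℚ⟦X⟧) ^ n ∣ limW i - seqW (2 * n) i := by
  intro n i
  rw [X_pow_dvd_iff]
  intro m hm
  have hd := chain (m + 1) (2 * m + 2) (2 * n) (by omega) (by omega) i
  have hc := (X_pow_dvd_iff.mp hd) m (Nat.lt_succ_self m)
  rw [map_sub] at hc ⊢
  rw [sub_eq_zero] at hc
  rw [sub_eq_zero]
  show coeff m (PowerSeries.mk fun m => coeff m (seqW (2 * m + 2) i)) = _
  rw [coeff_mk]
  exact hc.symm

lemma limW_fix : stp limW = limW := by
  funext i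
  apply eqz
  intro n
  have h2 := close_step (hu n) i
  have h3 := hstep n (2 * n) le_rfl i
  have h4 := hu n i
  have e : stp limW i - limW i =
      (stp limW i - stp (seqW (2 * n)) i) - (seqW (2 * n) i - seqW (2 * n + 1) i)
        - (limW i - seqW (2 * n) i) + (stp (seqW (2 * n)) i - seqW (2 * n + 1) i) := by
    ring
  have e2 : stp (seqW (2 * n)) i - seqW (2 * n + 1) i = 0 := by
    rw [seqW_succ]; ring
  rw [e, e2, add_zero]
  exact dvd_sub (dvd_sub h2 h3) h4

lemma sys_of_fix {v : Vec16} (h : stp v = v) :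
    SysLp2 (v 0) (v 1) (v 2) (v 3) (v 4) (v 5) (v 6) (v 7) (v 8) (v 9) (v 10)
      (v 11) (v 12) (v 13) (v 14) (v 15) :=
  ⟨(congrFun h 0).symm, (congrFun h 1).symm, (congrFun h 2).symm, (congrFun h 3).symm,
   (congrFun h 4).symm, (congrFun h 5).symm, (congrFun h 6).symm, (congrFun h 7).symm,
   (congrFun h 8).symm, (congrFun h 9).symm, (congrFun h 10).symm, (congrFun h 11).symm,
   (congrFun h 12).symm, (congrFun h 13).symm, (congrFun h 14).symm, (congrFun h 15).symm⟩

lemma fix_of_sys {K01 P01 P1100 P1010 P0110 L L0 L00 L01 Q Q0 Q00 Q01 Q100 Q010 Q110 :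
    PowerSeries ℚ}
    (h : SysLp2 K01 P01 P1100 P1010 P0110 L L0 L00 L01 Q Q0 Q00 Q01 Q100 Q010 Q110) :
    stp ![K01, P01, P1100, P1010, P0110, L, L0, L00, L01, Q, Q0, Q00, Q01, Q100, Q010, Q110]
      = ![K01, P01, P1100, P1010, P0110, L, L0, L00, L01, Q, Q0, Q00, Q01, Q100, Q010, Q110] := by
  obtain ⟨h1, h2, h3, h4, h5, h6, h7, h8, h9, h10, h11, h12, h13, h14, h15, h16⟩ := h
  funext i
  fin_cases i
  · exact h1.symm
  · exact h2.symm
  · exact h3.symm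
  · exact h4.symm
  · exact h5.symm
  · exact h6.symm
  · exact h7.symm
  · exact h8.symm
  · exact h9.symm
  · exact h10.symm
  · exact h11.symm
  · exact h12.symm
  · exact h13.symm
  · exact h14.symm
  · exact h15.symm
  · exact h16.symm

lemma fix_unique {a b : Vec16} (ha : stp a = a) (hb : stp b = b) : a = b := by
  have hga : ∀ i : Fin 16, i ≠ 5 → (X : ℚ⟦X⟧) ∣ a i := by
    have h := good_step a (ha ▸ (stepX a).1) (ha ▸ (stepX a).2.1) (ha ▸ (stepX a).2.2.1)
      (ha ▸ (stepX a).2.2.2)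
    rw [ha] at h
    exact h
  have key : ∀ n, ∀ i, (X : ℚ⟦X⟧) ^ n ∣ a i - b i := by
    intro n
    induction n with
    | zero => intro i; simp
    | succ n ih =>
        have h2 := close_double ih (by rw [ha]; exact hga)
        simp only [ha, hb] at h2
        exact h2
  funext i
  exact eqz fun n => key n i

/-- There is exactly one 16-tuple of power series in `ℚ[[t]]` satisfying the
system `SysLp2`, and the series `L` of this solution satisfies the degree-6
equation (19) of the paper (the algebraic equation for the generating
function of `𝕃⁽²⁾`). -/
theorem sysLp2_unique_and_sextic :
    (∃! v : PowerSeries ℚ × PowerSeries ℚ × PowerSeries ℚ × PowerSeries ℚ ×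
        PowerSeries ℚ × PowerSeries ℚ × PowerSeries ℚ × PowerSeries ℚ ×
        PowerSeries ℚ × PowerSeries ℚ × PowerSeries ℚ × PowerSeries ℚ ×
        PowerSeries ℚ × PowerSeries ℚ × PowerSeries ℚ × PowerSeries ℚ,
      SysLp2 v.1 v.2.1 v.2.2.1 v.2.2.2.1 v.2.2.2.2.1 v.2.2.2.2.2.1
        v.2.2.2.2.2.2.1 v.2.2.2.2.2.2.2.1 v.2.2.2.2.2.2.2.2.1
        v.2.2.2.2.2.2.2.2.2.1 v.2.2.2.2.2.2.2.2.2.2.1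
        v.2.2.2.2.2.2.2.2.2.2.2.1 v.2.2.2.2.2.2.2.2.2.2.2.2.1
        v.2.2.2.2.2.2.2.2.2.2.2.2.2.1 v.2.2.2.2.2.2.2.2.2.2.2.2.2.2.1
        v.2.2.2.2.2.2.2.2.2.2.2.2.2.2.2) ∧
    (∀ K01 P01 P1100 P1010 P0110 L L0 L00 L01 Q Q0 Q00 Q01 Q100 Q010 Q110 :
        PowerSeries ℚ,
      SysLp2 K01 P01 P1100 P1010 P0110 L L0 L00 L01 Q Q0 Q00 Q01 Q100 Q010 Q110 →
      2 * X ^ 5 * L ^ 6 - X ^ 4 * (X + 8) * L ^ 5 - X ^ 3 * (3 * X ^ 2 - 16) * L ^ 4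
        + X ^ 2 * (2 * X + 3) * (2 * X - 5) * L ^ 3
        - X * (2 * X ^ 2 - 7 * X - 7) * L ^ 2
        - (5 * X + 1) * L + 1 = 0) := by
  constructor
  · refine ⟨(limW 0, limW 1, limW 2, limW 3, limW 4, limW 5, limW 6, limW 7, limW 8,
      limW 9, limW 10, limW 11, limW 12, limW 13, limW 14, limW 15),
      sys_of_fix limW_fix, ?_⟩
    rintro ⟨y0, y1, y2, y3, y4, y5, y6, y7, y8, y9, y10, y11, y12, y13, y14, y15⟩ hy
    have hfy := fix_of_sys hy
    have heq := fix_unique hfy limW_fix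
    have hc : ∀ i : Fin 16,
        (![y0, y1, y2, y3, y4, y5, y6, y7, y8, y9, y10, y11, y12, y13, y14, y15] :
          Vec16) i = limW i := fun i => congrFun heq i
    simp only [Prod.mk.injEq]
    exact ⟨hc 0, hc 1, hc 2, hc 3, hc 4, hc 5, hc 6, hc 7, hc 8, hc 9, hc 10, hc 11,
      hc 12, hc 13, hc 14, hc 15⟩
  · intro K01 P01 P1100 P1010 P0110 L L0 L00 L01 Q Q0 Q00 Q01 Q100 Q010 Q110 h
    obtain ⟨h1, h2, h3, h4, h5, h6, h7, h8, h9, h10, h11, h12, h13, h14, h15, h16⟩ := h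
    have hXL : (1 - X * L : ℚ⟦X⟧) ≠ 0 := by
      intro hc
      have := congrArg (constantCoeff (R := ℚ)) hc
      simp at this
    have key : (2 * X ^ 5 * L ^ 6 - X ^ 4 * (X + 8) * L ^ 5
        - X ^ 3 * (3 * X ^ 2 - 16) * L ^ 4
        + X ^ 2 * (2 * X + 3) * (2 * X - 5) * L ^ 3
        - X * (2 * X ^ 2 - 7 * X - 7) * L ^ 2
        - (5 * X + 1) * L + 1) * ((1 - X * L) * (1 - X * L)) = 0 := by
      linear_combination (norm := ring1)
        ((4 : ℚ⟦X⟧) * X ^ 2 * L ^ 2 + (-16 : ℚ⟦X⟧) * X ^ 3 * L ^ 3 + (26 : ℚ⟦X⟧) * X ^ 4 * L ^ 4 + (-20 : ℚ⟦X⟧) * X ^ 5 * L ^ 5 + (6 : ℚ⟦X⟧) * X ^ 6 * L ^ 6) * h1 +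
        ((2 : ℚ⟦X⟧) * X * L ^ 2 + (4 : ℚ⟦X⟧) * X ^ 2 * L ^ 2 + (-10 : ℚ⟦X⟧) * X ^ 2 * L ^ 3 + (-16 : ℚ⟦X⟧) * X ^ 3 * L ^ 3 + (22 : ℚ⟦X⟧) * X ^ 3 * L ^ 4 + (26 : ℚ⟦X⟧) * X ^ 4 * L ^ 4 + (-26 : ℚ⟦X⟧) * X ^ 4 * L ^ 5 + (-20 : ℚ⟦X⟧) * X ^ 5 * L ^ 5 + (16 : ℚ⟦X⟧) * X ^ 5 * L ^ 6 + (6 : ℚ⟦X⟧) * X ^ 6 * L ^ 6 + (-4 : ℚ⟦X⟧) * X ^ 6 * L ^ 7) * h2 +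
        ((2 : ℚ⟦X⟧) * X * L ^ 2 + (-8 : ℚ⟦X⟧) * X ^ 2 * L ^ 3 + (12 : ℚ⟦X⟧) * X ^ 3 * L ^ 4 + (-8 : ℚ⟦X⟧) * X ^ 4 * L ^ 5 + (2 : ℚ⟦X⟧) * X ^ 5 * L ^ 6) * h3 +
        ((2 : ℚ⟦X⟧) * X * L ^ 2 + (-8 : ℚ⟦X⟧) * X ^ 2 * L ^ 3 + (14 : ℚ⟦X⟧) * X ^ 3 * L ^ 4 + (-12 : ℚ⟦X⟧) * X ^ 4 * L ^ 5 + (4 : ℚ⟦X⟧) * X ^ 5 * L ^ 6) * h4 +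
        ((2 : ℚ⟦X⟧) * X * L ^ 2 + (-8 : ℚ⟦X⟧) * X ^ 2 * L ^ 3 + (14 : ℚ⟦X⟧) * X ^ 3 * L ^ 4 + (-12 : ℚ⟦X⟧) * X ^ 4 * L ^ 5 + (4 : ℚ⟦X⟧) * X ^ 5 * L ^ 6) * h5 +
        ((-1 : ℚ⟦X⟧) + (7 : ℚ⟦X⟧) * X * L + (-20 : ℚ⟦X⟧) * X ^ 2 * L ^ 2 + (-2 : ℚ⟦X⟧) * X ^ 3 * L ^ 2 + (35 : ℚ⟦X⟧) * X ^ 3 * L ^ 3 + (8 : ℚ⟦X⟧) * X ^ 4 * L ^ 3 + (-41 : ℚ⟦X⟧) * X ^ 4 * L ^ 4 + (-13 : ℚ⟦X⟧) * X ^ 5 * L ^ 4 + (32 : ℚ⟦X⟧) * X ^ 5 * L ^ 5 + (10 : ℚ⟦X⟧) * X ^ 6 * L ^ 5 + (-14 : ℚ⟦X⟧) * X ^ 6 * L ^ 6 + (-3 : ℚ⟦X⟧) * X ^ 7 * L ^ 6 + (2 : ℚ⟦X⟧) * X ^ 7 * L ^ 7) * h6 +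
        ((-6 : ℚ⟦X⟧) * X ^ 3 * L ^ 3 + (18 : ℚ⟦X⟧) * X ^ 4 * L ^ 4 + (-22 : ℚ⟦X⟧) * X ^ 5 * L ^ 5 + (10 : ℚ⟦X⟧) * X ^ 6 * L ^ 6) * h7 +
        ((-2 : ℚ⟦X⟧) * X ^ 2 * L ^ 2 + (8 : ℚ⟦X⟧) * X ^ 3 * L ^ 3 + (-14 : ℚ⟦X⟧) * X ^ 4 * L ^ 4 + (12 : ℚ⟦X⟧) * X ^ 5 * L ^ 5 + (-4 : ℚ⟦X⟧) * X ^ 6 * L ^ 6) * h8 +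
        ((-4 : ℚ⟦X⟧) * X ^ 2 * L ^ 2 + (16 : ℚ⟦X⟧) * X ^ 3 * L ^ 3 + (-26 : ℚ⟦X⟧) * X ^ 4 * L ^ 4 + (20 : ℚ⟦X⟧) * X ^ 5 * L ^ 5 + (-6 : ℚ⟦X⟧) * X ^ 6 * L ^ 6) * h9 +
        ((-1 : ℚ⟦X⟧) * L + (6 : ℚ⟦X⟧) * X * L ^ 2 + (-14 : ℚ⟦X⟧) * X ^ 2 * L ^ 3 + (-2 : ℚ⟦X⟧) * X ^ 3 * L ^ 3 + (21 : ℚ⟦X⟧) * X ^ 3 * L ^ 4 + (6 : ℚ⟦X⟧) * X ^ 4 * L ^ 4 + (-20 : ℚ⟦X⟧) * X ^ 4 * L ^ 5 + (-7 : ℚ⟦X⟧) * X ^ 5 * L ^ 5 + (12 : ℚ⟦X⟧) * X ^ 5 * L ^ 6 + (3 : ℚ⟦X⟧) * X ^ 6 * L ^ 6 + (-2 : ℚ⟦X⟧) * X ^ 6 * L ^ 7) * h10 +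
        ((-2 : ℚ⟦X⟧) * X * L ^ 2 + (10 : ℚ⟦X⟧) * X ^ 2 * L ^ 3 + (4 : ℚ⟦X⟧) * X ^ 3 * L ^ 3 + (-28 : ℚ⟦X⟧) * X ^ 3 * L ^ 4 + (-12 : ℚ⟦X⟧) * X ^ 4 * L ^ 4 + (38 : ℚ⟦X⟧) * X ^ 4 * L ^ 5 + (14 : ℚ⟦X⟧) * X ^ 5 * L ^ 5 + (-26 : ℚ⟦X⟧) * X ^ 5 * L ^ 6 + (-6 : ℚ⟦X⟧) * X ^ 6 * L ^ 6 + (4 : ℚ⟦X⟧) * X ^ 6 * L ^ 7) * h11 +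
        ((-2 : ℚ⟦X⟧) * X ^ 2 * L ^ 3 + (6 : ℚ⟦X⟧) * X ^ 3 * L ^ 4 + (-8 : ℚ⟦X⟧) * X ^ 4 * L ^ 5 + (4 : ℚ⟦X⟧) * X ^ 5 * L ^ 6) * h12 +
        ((-4 : ℚ⟦X⟧) * X ^ 2 * L ^ 3 + (12 : ℚ⟦X⟧) * X ^ 3 * L ^ 4 + (-14 : ℚ⟦X⟧) * X ^ 4 * L ^ 5 + (6 : ℚ⟦X⟧) * X ^ 5 * L ^ 6) * h13 +
        ((-2 : ℚ⟦X⟧) * X * L ^ 2 + (8 : ℚ⟦X⟧) * X ^ 2 * L ^ 3 + (-12 : ℚ⟦X⟧) * X ^ 3 * L ^ 4 + (8 : ℚ⟦X⟧) * X ^ 4 * L ^ 5 + (-2 : ℚ⟦X⟧) * X ^ 5 * L ^ 6) * h14 +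
        ((-2 : ℚ⟦X⟧) * X * L ^ 2 + (8 : ℚ⟦X⟧) * X ^ 2 * L ^ 3 + (-14 : ℚ⟦X⟧) * X ^ 3 * L ^ 4 + (12 : ℚ⟦X⟧) * X ^ 4 * L ^ 5 + (-4 : ℚ⟦X⟧) * X ^ 5 * L ^ 6) * h15 +
        ((-2 : ℚ⟦X⟧) * X * L ^ 2 + (8 : ℚ⟦X⟧) * X ^ 2 * L ^ 3 + (-14 : ℚ⟦X⟧) * X ^ 3 * L ^ 4 + (12 : ℚ⟦X⟧) * X ^ 4 * L ^ 5 + (-4 : ℚ⟦X⟧) * X ^ 5 * L ^ 6) * h16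
    rcases mul_eq_zero.mp key with hz | hz
    · exact hz
    · exact absurd (mul_self_eq_zero.mp hz) hXL
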